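/- Let x_n > 0 be the distance from a point noise source to the center of a spherical receiver of radius r_obs > 0, and set r_dif = r_obs − x_n, r_sum = r_obs + x_n, and β = sgn(r_dif). Then the improper integral ∫₀^∞ { (1/2)[erf((r_obs − x_n)/(2√τ)) + erf((r_obs + x_n)/(2√τ))] + (1/x_n)·√(τ/π)·[exp(−r_sum²/(4τ)) − exp(−r_dif²/(4τ))] } dτ converges and equals r_sum³/(6 x_n) − |r_dif|³/(6 x_n) − r_sum²/4 − β·r_dif²/4. -/

import Mathlib

open Real MeasureTheory Set Filter Topology intervalIntegral

noncomputable def erf (a : ℝ) : ℝ := (2 / Real.sqrt π) * ∫ b in (0:ℝ)..a, Real.exp (-b^2)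




lemma sqrt_pi_pos : 0 < Real.sqrt π := Real.sqrt_pos.2 pi_pos

lemma erf_hasDerivAt (a : ℝ) :
    HasDerivAt erf (2 / Real.sqrt π * Real.exp (-a^2)) a := by
  have hc : Continuous fun b : ℝ => Real.exp (-b^2) := by continuity
  have h := intervalIntegral.integral_hasDerivAt_right
    (hc.intervalIntegrable 0 a)
    (hc.stronglyMeasurableAtFilter _ _)
    hc.continuousAt
  exact h.const_mul (2 / Real.sqrt π)

lemma erf_continuous : Continuous erf :=
  continuous_iff_continuousAt.2 fun a => (erf_hasDerivAt a).continuousAt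

lemma erf_zero : erf 0 = 0 := by simp [erf]

lemma erf_neg (a : ℝ) : erf (-a) = - erf a := by
  have : (∫ b in (0:ℝ)..(-a), Real.exp (-b^2)) = - ∫ b in (0:ℝ)..a, Real.exp (-b^2) := by
    rw [show (0:ℝ) = -0 by ring, ← intervalIntegral.integral_comp_neg (fun b => Real.exp (-b^2))]
    simp [intervalIntegral.integral_symm 0 a]
  simp [erf, this]

lemma erf_monotone : Monotone erf := by
  have : ∀ a : ℝ, 0 ≤ 2 / Real.sqrt π * Real.exp (-a^2) := fun a =>
    mul_nonneg (by positivity) (Real.exp_nonneg _)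
  exact monotone_of_deriv_nonneg
    (fun a => (erf_hasDerivAt a).differentiableAt)
    (fun a => by rw [(erf_hasDerivAt a).deriv]; exact this a)

lemma erf_tendsto_atTop : Tendsto erf atTop (𝓝 1) := by
  have hint : MeasureTheory.IntegrableOn (fun b : ℝ => Real.exp (-b^2)) (Set.Ioi 0) := by
    have := (integrable_exp_neg_mul_sq (by norm_num : (0:ℝ) < 1)).integrableOn (s := Set.Ioi 0)
    simpa using this
  have h := MeasureTheory.intervalIntegral_tendsto_integral_Ioi 0 hint tendsto_id
  have hval : (∫ b in Set.Ioi (0:ℝ), Real.exp (-b^2)) = Real.sqrt π / 2 := by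
    have := integral_gaussian_Ioi 1
    simpa using this
  rw [hval] at h
  have := h.const_mul (2 / Real.sqrt π)
  have h2 : (2 / Real.sqrt π) * (Real.sqrt π / 2) = 1 := by
    field_simp
  unfold erf
  simpa [h2, mul_comm] using this

lemma erf_le_one (x : ℝ) : erf x ≤ 1 :=
  erf_monotone.ge_of_tendsto erf_tendsto_atTop x

lemma neg_one_le_erf (x : ℝ) : -1 ≤ erf x := by
  have := erf_le_one (-x)
  rw [erf_neg] at this
  linarith

lemma abs_erf_le_one (x : ℝ) : |erf x| ≤ 1 :=
  abs_le.2 ⟨neg_one_le_erf x, erf_le_one x⟩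

lemma exp_neg_sub_one_abs_le {y : ℝ} (hy : 0 ≤ y) : |Real.exp (-y) - 1| ≤ y := by
  have h1 : Real.exp (-y) ≤ 1 := Real.exp_le_one_iff.2 (by linarith)
  have h2 : -y + 1 ≤ Real.exp (-y) := Real.add_one_le_exp _
  rw [abs_le]; constructor <;> linarith

lemma exp_neg_taylor_abs_le {y : ℝ} (hy : 0 ≤ y) : |Real.exp (-y) - 1 + y| ≤ y^2 := by
  have key : Real.exp (-y) - 1 + y = ∫ t in (0:ℝ)..y, (1 - Real.exp (-t)) := by
    have := intervalIntegral.integral_eq_sub_of_hasDerivAt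
      (f := fun t => t + Real.exp (-t)) (f' := fun t => 1 - Real.exp (-t))
      (a := 0) (b := y)
      (fun t _ => by
        have h := ((Real.hasDerivAt_exp (-t)).comp t (hasDerivAt_neg t))
        exact ((hasDerivAt_id t).add h).congr_deriv (by ring))
      (by
        apply Continuous.intervalIntegrable
        continuity)
    rw [this]; simp; ring
  rw [key]
  have hb := intervalIntegral.norm_integral_le_of_norm_le_const
    (a := (0:ℝ)) (b := y) (C := y) (f := fun t => 1 - Real.exp (-t))
    (fun t ht => by
      rw [Set.uIoc_of_le hy] at ht
      have ht0 : 0 < t := ht.1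
      have h1 : Real.exp (-t) ≤ 1 := Real.exp_le_one_iff.2 (by linarith)
      have h2 : -t + 1 ≤ Real.exp (-t) := Real.add_one_le_exp _
      rw [Real.norm_eq_abs, abs_le]
      refine ⟨by simp; linarith, by simp; linarith [ht.2]⟩)
  rw [Real.norm_eq_abs] at hb
  calc |∫ t in (0:ℝ)..y, (1 - Real.exp (-t))| ≤ y * |y - 0| := hb
    _ = y^2 := by rw [abs_of_nonneg (by linarith)]; ring

lemma erf_lin_bound (x : ℝ) :
    |erf x - 2 / Real.sqrt π * x| ≤ 2 / Real.sqrt π * (x^2 * |x|) := by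
  have key : erf x - 2 / Real.sqrt π * x
      = (2 / Real.sqrt π) * ∫ b in (0:ℝ)..x, (Real.exp (-b^2) - 1) := by
    rw [intervalIntegral.integral_sub ((by continuity : Continuous fun b : ℝ =>
      Real.exp (-b^2)).intervalIntegrable 0 x) (intervalIntegrable_const)]
    simp [erf]; ring
  rw [key, abs_mul, abs_of_nonneg (by positivity : (0:ℝ) ≤ 2 / Real.sqrt π)]
  apply mul_le_mul_of_nonneg_left _ (by positivity)
  have hb := intervalIntegral.norm_integral_le_of_norm_le_const
    (a := (0:ℝ)) (b := x) (C := x^2) (f := fun b => Real.exp (-b^2) - 1)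
    (fun b hb => by
      have hb2 : b^2 ≤ x^2 := by
        rcases Set.mem_uIoc.1 hb with h | h
        · nlinarith [h.1, h.2]
        · nlinarith [h.1, h.2]
      have := exp_neg_sub_one_abs_le (y := b^2) (by positivity)
      rw [Real.norm_eq_abs]
      exact this.trans hb2
      )
  rw [Real.norm_eq_abs] at hb
  simpa using hb







lemma harg (a τ : ℝ) (hτ : 0 < τ) :
    HasDerivAt (fun t => a / (2 * Real.sqrt t)) (-(a / (4 * τ * Real.sqrt τ))) τ := by
  have hst : HasDerivAt Real.sqrt (1 / (2 * Real.sqrt τ)) τ := Real.hasDerivAt_sqrt hτ.ne'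
  have hsτ : Real.sqrt τ ≠ 0 := (Real.sqrt_pos.2 hτ).ne'
  have h := (hst.inv hsτ).const_mul (a / 2)
  have heq : (fun t => a / 2 * (Real.sqrt t)⁻¹) = fun t => a / (2 * Real.sqrt t) := by
    funext t; field_simp
  rw [← heq]
  convert (config := {postTransparency := .default}) h using 1
  have h2 : Real.sqrt τ ^ 2 = τ := Real.sq_sqrt hτ.le
  rw [h2]
  field_simp
  ring

lemma hE (a τ : ℝ) (hτ : 0 < τ) :
    HasDerivAt (fun t => erf (a / (2 * Real.sqrt t)))
      (-(a * Real.exp (-(a^2) / (4*τ)) / (2 * Real.sqrt π * τ * Real.sqrt τ))) τ := by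
  have h := (erf_hasDerivAt (a / (2 * Real.sqrt τ))).comp τ (harg a τ hτ)
  have hexp : -(a / (2 * Real.sqrt τ))^2 = -(a^2) / (4*τ) := by
    rw [div_pow]
    have h2 : Real.sqrt τ ^ 2 = τ := Real.sq_sqrt hτ.le
    rw [mul_pow]; rw [h2]; ring
  rw [hexp] at h
  convert (config := {postTransparency := .default}) h using 1
  have hsτ : Real.sqrt τ ≠ 0 := (Real.sqrt_pos.2 hτ).ne'
  field_simp
  ring

lemma hG (a τ : ℝ) (hτ : 0 < τ) :
    HasDerivAt (fun t => Real.exp (-(a^2) / (4*t)))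
      (a^2 / (4*τ^2) * Real.exp (-(a^2) / (4*τ))) τ := by
  have hinner : HasDerivAt (fun t : ℝ => -(a^2) / (4*t)) (a^2 / (4*τ^2)) τ := by
    have h := (hasDerivAt_inv hτ.ne').const_mul (-(a^2) / 4)
    have heq : (fun t : ℝ => -(a^2) / 4 * t⁻¹) = fun t => -(a^2) / (4*t) := by
      funext t; field_simp
    rw [heq] at h
    convert (config := {postTransparency := .default}) h using 1
    field_simp
  have h := (Real.hasDerivAt_exp (-(a^2) / (4*τ))).comp τ hinner
  convert (config := {postTransparency := .default}) h using 1
  ring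

lemma hsqrt' (τ : ℝ) (hτ : 0 < τ) : HasDerivAt Real.sqrt (1 / (2 * Real.sqrt τ)) τ :=
  Real.hasDerivAt_sqrt hτ.ne'

lemma htau_sqrt (τ : ℝ) (hτ : 0 < τ) :
    HasDerivAt (fun t : ℝ => t * Real.sqrt t) (3/2 * Real.sqrt τ) τ := by
  have h := (hasDerivAt_id τ).mul (hsqrt' τ hτ)
  convert (config := {postTransparency := .default}) h using 1
  have hsτ : Real.sqrt τ ≠ 0 := (Real.sqrt_pos.2 hτ).ne'
  have h2 : Real.sqrt τ ^ 2 = τ := Real.sq_sqrt hτ.le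
  simp only [id_eq]
  field_simp
  nlinarith [h2]

noncomputable def Fa (x r t : ℝ) : ℝ :=
  t/2 * (erf ((r-x)/(2*Real.sqrt t)) + erf ((r+x)/(2*Real.sqrt t)))
  + 2/(3*x*Real.sqrt π) * (t*Real.sqrt t) *
      (Real.exp (-((r+x)^2)/(4*t)) - Real.exp (-((r-x)^2)/(4*t)))
  + ((r+x)/(2*Real.sqrt π) - (r+x)^2/(3*x*Real.sqrt π)) *
      (Real.sqrt t * Real.exp (-((r+x)^2)/(4*t)))
  + ((r-x)/(2*Real.sqrt π) + (r-x)^2/(3*x*Real.sqrt π)) *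
      (Real.sqrt t * Real.exp (-((r-x)^2)/(4*t)))
  + ((r+x)^2/4 - (r+x)^3/(6*x)) * erf ((r+x)/(2*Real.sqrt t))
  + ((r-x)^2/4 + (r-x)^3/(6*x)) * erf ((r-x)/(2*Real.sqrt t))

lemma Fa_hasDerivAt (x r τ : ℝ) (hx : 0 < x) (hτ : 0 < τ) :
    HasDerivAt (Fa x r)
      ((1/2) * (erf ((r - x) / (2 * Real.sqrt τ)) + erf ((r + x) / (2 * Real.sqrt τ)))
        + (1/x) * Real.sqrt (τ/π)
            * (Real.exp (-((r+x)^2) / (4*τ)) - Real.exp (-((r-x)^2) / (4*τ)))) τ := by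
  have hsτ : Real.sqrt τ ≠ 0 := (Real.sqrt_pos.2 hτ).ne'
  have hsπ : Real.sqrt π ≠ 0 := sqrt_pi_pos.ne'
  have h2 : Real.sqrt τ ^ 2 = τ := Real.sq_sqrt hτ.le
  have h1 := ((hasDerivAt_id τ).div_const 2).mul ((hE (r-x) τ hτ).add (hE (r+x) τ hτ))
  have hB := ((htau_sqrt τ hτ).mul ((hG (r+x) τ hτ).sub (hG (r-x) τ hτ))).const_mul
      (2/(3*x*Real.sqrt π))
  have hCs := ((hsqrt' τ hτ).mul (hG (r+x) τ hτ)).const_mul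
      ((r+x)/(2*Real.sqrt π) - (r+x)^2/(3*x*Real.sqrt π))
  have hCd := ((hsqrt' τ hτ).mul (hG (r-x) τ hτ)).const_mul
      ((r-x)/(2*Real.sqrt π) + (r-x)^2/(3*x*Real.sqrt π))
  have hMs := (hE (r+x) τ hτ).const_mul ((r+x)^2/4 - (r+x)^3/(6*x))
  have hMd := (hE (r-x) τ hτ).const_mul ((r-x)^2/4 + (r-x)^3/(6*x))
  have htot := ((((h1.add hB).add hCs).add hCd).add hMs).add hMd
  have hfun : (fun t =>
      id t / 2 * (erf ((r - x) / (2 * Real.sqrt t)) + erf ((r + x) / (2 * Real.sqrt t))) +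
        2 / (3 * x * Real.sqrt π) * (t * Real.sqrt t *
          (Real.exp (-(r + x) ^ 2 / (4 * t)) - Real.exp (-(r - x) ^ 2 / (4 * t)))) +
        ((r + x) / (2 * Real.sqrt π) - (r + x) ^ 2 / (3 * x * Real.sqrt π)) *
          (Real.sqrt t * Real.exp (-(r + x) ^ 2 / (4 * t))) +
        ((r - x) / (2 * Real.sqrt π) + (r - x) ^ 2 / (3 * x * Real.sqrt π)) *
          (Real.sqrt t * Real.exp (-(r - x) ^ 2 / (4 * t))) +
        ((r + x) ^ 2 / 4 - (r + x) ^ 3 / (6 * x)) * erf ((r + x) / (2 * Real.sqrt t)) +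
        ((r - x) ^ 2 / 4 + (r - x) ^ 3 / (6 * x)) * erf ((r - x) / (2 * Real.sqrt t)))
      = Fa x r := by
    funext t; simp only [Fa, id_eq]; ring
  rw [← hfun]
  convert (config := {postTransparency := .default}) htot using 1
  simp only [Pi.add_apply, Pi.sub_apply, id_eq]
  rw [Real.sqrt_div hτ.le]
  set u := Real.sqrt τ with hu
  set p := Real.sqrt π with hp
  set Es := Real.exp (-(r + x) ^ 2 / (4 * τ)) with hEs
  set Ed := Real.exp (-(r - x) ^ 2 / (4 * τ)) with hEd
  set A := erf ((r - x) / (2 * u)) with hA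
  set B := erf ((r + x) / (2 * u)) with hB2
  rw [← h2]
  field_simp
  ring



lemma sqrt_tendsto_atTop : Tendsto Real.sqrt atTop atTop := by
  apply tendsto_atTop_atTop_of_monotone (fun a b hab => Real.sqrt_le_sqrt hab)
  intro b
  exact ⟨b^2, by rw [Real.sqrt_sq_eq_abs]; exact le_abs_self b⟩

lemma tendsto_const_div_sqrt (C : ℝ) :
    Tendsto (fun τ : ℝ => C / Real.sqrt τ) atTop (𝓝 0) :=
  tendsto_const_nhds.div_atTop sqrt_tendsto_atTop

lemma tendsto_aux1 (a : ℝ) :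
    Tendsto (fun τ : ℝ => τ/2 * erf (a/(2*Real.sqrt τ)) - a/(2*Real.sqrt π) * Real.sqrt τ)
      atTop (𝓝 0) := by
  apply squeeze_zero_norm' (a := fun τ => |a|^3/(8*Real.sqrt π) / Real.sqrt τ)
  · filter_upwards [eventually_gt_atTop (0:ℝ)] with τ hτ
    have hsτ : (0:ℝ) < Real.sqrt τ := Real.sqrt_pos.2 hτ
    have h2 : Real.sqrt τ ^ 2 = τ := Real.sq_sqrt hτ.le
    have key : τ/2 * erf (a/(2*Real.sqrt τ)) - a/(2*Real.sqrt π) * Real.sqrt τ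
        = τ/2 * (erf (a/(2*Real.sqrt τ)) - 2/Real.sqrt π * (a/(2*Real.sqrt τ))) := by
      set u := Real.sqrt τ with hu
      rw [← h2]; field_simp
    rw [key, Real.norm_eq_abs, abs_mul]
    have hb := erf_lin_bound (a/(2*Real.sqrt τ))
    have : |τ/2| * |erf (a/(2*Real.sqrt τ)) - 2/Real.sqrt π * (a/(2*Real.sqrt τ))|
        ≤ (τ/2) * (2/Real.sqrt π * ((a/(2*Real.sqrt τ)))^2 * |a/(2*Real.sqrt τ)|) := by
      rw [abs_of_nonneg (by linarith : (0:ℝ) ≤ τ/2)]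
      apply mul_le_mul_of_nonneg_left _ (by linarith)
      calc _ ≤ 2/Real.sqrt π * ((a/(2*Real.sqrt τ))^2 * |a/(2*Real.sqrt τ)|) := hb
        _ = _ := by ring
    refine this.trans (le_of_eq ?_)
    have h3 : |a/(2*Real.sqrt τ)| = |a|/(2*Real.sqrt τ) := by
      rw [abs_div, abs_of_nonneg (by positivity : (0:ℝ) ≤ 2*Real.sqrt τ)]
    rw [h3, div_pow, ← sq_abs a]
    set u := Real.sqrt τ with hu
    rw [← h2]; field_simp; ring
  · exact tendsto_const_div_sqrt _

lemma tendsto_aux2 (a : ℝ) :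
    Tendsto (fun τ : ℝ => Real.sqrt τ * (τ*(Real.exp (-(a^2)/(4*τ)) - 1) + a^2/4))
      atTop (𝓝 0) := by
  apply squeeze_zero_norm' (a := fun τ => a^4/16 / Real.sqrt τ)
  · filter_upwards [eventually_gt_atTop (0:ℝ)] with τ hτ
    have hsτ : (0:ℝ) < Real.sqrt τ := Real.sqrt_pos.2 hτ
    have h2 : Real.sqrt τ ^ 2 = τ := Real.sq_sqrt hτ.le
    have hy : (0:ℝ) ≤ a^2/(4*τ) := by positivity
    have hb := exp_neg_taylor_abs_le hy
    have key : τ*(Real.exp (-(a^2)/(4*τ)) - 1) + a^2/4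
        = τ * (Real.exp (-(a^2/(4*τ))) - 1 + a^2/(4*τ)) := by
      rw [neg_div]; field_simp
    rw [Real.norm_eq_abs, key, abs_mul, abs_mul,
      abs_of_nonneg hsτ.le, abs_of_nonneg hτ.le]
    have : τ * |Real.exp (-(a^2/(4*τ))) - 1 + a^2/(4*τ)| ≤ τ * (a^2/(4*τ))^2 :=
      mul_le_mul_of_nonneg_left hb hτ.le
    calc Real.sqrt τ * (τ * |Real.exp (-(a^2/(4*τ))) - 1 + a^2/(4*τ)|)
        ≤ Real.sqrt τ * (τ * (a^2/(4*τ))^2) := mul_le_mul_of_nonneg_left this hsτ.le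
      _ = a^4/16 / Real.sqrt τ := by
          set u := Real.sqrt τ with hu
          rw [← h2]; field_simp; ring
  · exact tendsto_const_div_sqrt _

lemma tendsto_aux3 (a q : ℝ) :
    Tendsto (fun τ : ℝ => q * (Real.sqrt τ * Real.exp (-(a^2)/(4*τ)) - Real.sqrt τ))
      atTop (𝓝 0) := by
  apply squeeze_zero_norm' (a := fun τ => |q| * a^2/4 / Real.sqrt τ)
  · filter_upwards [eventually_gt_atTop (0:ℝ)] with τ hτ
    have hsτ : (0:ℝ) < Real.sqrt τ := Real.sqrt_pos.2 hτ
    have h2 : Real.sqrt τ ^ 2 = τ := Real.sq_sqrt hτ.le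
    have hy : (0:ℝ) ≤ a^2/(4*τ) := by positivity
    have hb := exp_neg_sub_one_abs_le hy
    have key : q * (Real.sqrt τ * Real.exp (-(a^2)/(4*τ)) - Real.sqrt τ)
        = q * Real.sqrt τ * (Real.exp (-(a^2/(4*τ))) - 1) := by
      rw [neg_div]; ring
    rw [Real.norm_eq_abs, key, abs_mul, abs_mul, abs_of_nonneg hsτ.le]
    calc |q| * Real.sqrt τ * |Real.exp (-(a^2/(4*τ))) - 1|
        ≤ |q| * Real.sqrt τ * (a^2/(4*τ)) := by
          apply mul_le_mul_of_nonneg_left hb (by positivity)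
      _ = |q| * a^2/4 / Real.sqrt τ := by
          set u := Real.sqrt τ with hu
          rw [← h2]; field_simp
  · exact tendsto_const_div_sqrt _

lemma tendsto_aux4 (a m : ℝ) :
    Tendsto (fun τ : ℝ => m * erf (a/(2*Real.sqrt τ))) atTop (𝓝 0) := by
  have h1 : Tendsto (fun τ : ℝ => a/(2*Real.sqrt τ)) atTop (𝓝 0) := by
    have := (tendsto_const_div_sqrt (a/2))
    refine this.congr fun τ => by rw [div_div]
  have h2 := (erf_continuous.tendsto 0).comp h1
  rw [erf_zero] at h2
  simpa using h2.const_mul m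



lemma Fa_tendsto_atTop (x r : ℝ) (hx : 0 < x) :
    Tendsto (Fa x r) atTop (𝓝 0) := by
  have hsπ : Real.sqrt π ≠ 0 := sqrt_pi_pos.ne'
  have h := ((((((tendsto_aux1 (r-x)).add (tendsto_aux1 (r+x))).add
    (((tendsto_aux2 (r+x)).sub (tendsto_aux2 (r-x))).const_mul (2/(3*x*Real.sqrt π)))).add
    (tendsto_aux3 (r+x) ((r+x)/(2*Real.sqrt π) - (r+x)^2/(3*x*Real.sqrt π)))).add
    (tendsto_aux3 (r-x) ((r-x)/(2*Real.sqrt π) + (r-x)^2/(3*x*Real.sqrt π)))).add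
    ((tendsto_aux4 (r+x) ((r+x)^2/4 - (r+x)^3/(6*x))).add
     (tendsto_aux4 (r-x) ((r-x)^2/4 + (r-x)^3/(6*x)))))
  have heq : ∀ τ : ℝ,
      ((((((τ/2 * erf ((r-x)/(2*Real.sqrt τ)) - (r-x)/(2*Real.sqrt π) * Real.sqrt τ)
        + (τ/2 * erf ((r+x)/(2*Real.sqrt τ)) - (r+x)/(2*Real.sqrt π) * Real.sqrt τ))
        + 2/(3*x*Real.sqrt π) *
          ((Real.sqrt τ * (τ*(Real.exp (-((r+x)^2)/(4*τ)) - 1) + (r+x)^2/4))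
           - (Real.sqrt τ * (τ*(Real.exp (-((r-x)^2)/(4*τ)) - 1) + (r-x)^2/4))))
        + ((r+x)/(2*Real.sqrt π) - (r+x)^2/(3*x*Real.sqrt π)) *
            (Real.sqrt τ * Real.exp (-((r+x)^2)/(4*τ)) - Real.sqrt τ))
        + ((r-x)/(2*Real.sqrt π) + (r-x)^2/(3*x*Real.sqrt π)) *
            (Real.sqrt τ * Real.exp (-((r-x)^2)/(4*τ)) - Real.sqrt τ))
        + (((r+x)^2/4 - (r+x)^3/(6*x)) * erf ((r+x)/(2*Real.sqrt τ))
           + ((r-x)^2/4 + (r-x)^3/(6*x)) * erf ((r-x)/(2*Real.sqrt τ))))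
      = Fa x r τ := by
    intro τ
    simp only [Fa]
    field_simp
    ring
  exact Filter.Tendsto.congr heq (by simpa using h)

lemma sqrt_tendsto_zero_within :
    Tendsto Real.sqrt (𝓝[>] (0:ℝ)) (𝓝[>] (0:ℝ)) := by
  rw [tendsto_nhdsWithin_iff]
  constructor
  · exact (Real.continuous_sqrt.tendsto' 0 0 (by simp)).mono_left nhdsWithin_le_nhds
  · filter_upwards [self_mem_nhdsWithin] with τ (hτ : (0:ℝ) < τ)
    exact Real.sqrt_pos.2 hτ

lemma tendsto_arg_atTop (a : ℝ) (ha : 0 < a) :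
    Tendsto (fun τ : ℝ => a/(2*Real.sqrt τ)) (𝓝[>] (0:ℝ)) atTop := by
  have h1 : Tendsto (fun τ : ℝ => (Real.sqrt τ)⁻¹) (𝓝[>] (0:ℝ)) atTop :=
    tendsto_inv_nhdsGT_zero.comp sqrt_tendsto_zero_within
  have h2 := h1.const_mul_atTop (show (0:ℝ) < a/2 by linarith)
  refine h2.congr fun τ => ?_
  rw [← div_eq_mul_inv, div_div]

lemma erf_comp_tendsto_sign (c : ℝ) :
    Tendsto (fun τ : ℝ => erf (c/(2*Real.sqrt τ))) (𝓝[>] (0:ℝ)) (𝓝 (Real.sign c)) := by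
  rcases lt_trichotomy c 0 with h | h | h
  · rw [Real.sign_of_neg h]
    have hpos := erf_tendsto_atTop.comp (tendsto_arg_atTop (-c) (by linarith))
    have := hpos.neg
    refine this.congr fun τ => ?_
    simp only [Function.comp]
    rw [show c/(2*Real.sqrt τ) = -((-c)/(2*Real.sqrt τ)) by ring, erf_neg]
  · subst h; simp only [Real.sign_zero, zero_div, erf_zero]; exact tendsto_const_nhds
  · rw [Real.sign_of_pos h]
    exact erf_tendsto_atTop.comp (tendsto_arg_atTop c h)

lemma Fa_tendsto_zero (x r : ℝ) (hx : 0 < x) (hr : 0 < r) :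
    Tendsto (Fa x r) (𝓝[>] (0:ℝ))
      (𝓝 (((r+x)^2/4 - (r+x)^3/(6*x)) * 1
         + ((r-x)^2/4 + (r-x)^3/(6*x)) * Real.sign (r-x))) := by
  have hid : Tendsto (fun τ : ℝ => τ) (𝓝[>] (0:ℝ)) (𝓝 0) :=
    (continuous_id.tendsto' 0 0 rfl).mono_left nhdsWithin_le_nhds
  have hsq : Tendsto (fun τ : ℝ => Real.sqrt τ) (𝓝[>] (0:ℝ)) (𝓝 0) :=
    sqrt_tendsto_zero_within.mono_right nhdsWithin_le_nhds
  have hmem : ∀ᶠ τ in 𝓝[>] (0:ℝ), (0:ℝ) < τ := self_mem_nhdsWithin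
  have hexp_le : ∀ (a τ : ℝ), 0 < τ → |Real.exp (-(a^2)/(4*τ))| ≤ 1 := by
    intro a τ hτ
    rw [abs_of_pos (Real.exp_pos _)]
    apply Real.exp_le_one_iff.2
    rw [neg_div, neg_nonpos]
    positivity
  -- t1
  have t1 : Tendsto (fun τ : ℝ => τ/2 * (erf ((r-x)/(2*Real.sqrt τ)) + erf ((r+x)/(2*Real.sqrt τ))))
      (𝓝[>] (0:ℝ)) (𝓝 0) := by
    apply squeeze_zero_norm' (a := fun τ : ℝ => τ)
    · filter_upwards [hmem] with τ hτ
      rw [Real.norm_eq_abs, abs_mul]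
      have h1 := abs_erf_le_one ((r-x)/(2*Real.sqrt τ))
      have h2 := abs_erf_le_one ((r+x)/(2*Real.sqrt τ))
      have h3 := abs_add_le (erf ((r-x)/(2*Real.sqrt τ))) (erf ((r+x)/(2*Real.sqrt τ)))
      rw [abs_of_pos (by linarith : (0:ℝ) < τ/2)]
      nlinarith
    · exact hid
  -- t2
  have t2 : Tendsto (fun τ : ℝ => 2/(3*x*Real.sqrt π) * (τ*Real.sqrt τ) *
      (Real.exp (-((r+x)^2)/(4*τ)) - Real.exp (-((r-x)^2)/(4*τ)))) (𝓝[>] (0:ℝ)) (𝓝 0) := by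
    apply squeeze_zero_norm' (a := fun τ : ℝ => |2/(3*x*Real.sqrt π)| * (τ*Real.sqrt τ) * 2)
    · filter_upwards [hmem] with τ hτ
      rw [Real.norm_eq_abs, abs_mul, abs_mul]
      have hs := Real.sqrt_nonneg τ
      have h1 := hexp_le (r+x) τ hτ
      have h2 := hexp_le (r-x) τ hτ
      have h3 := abs_sub (Real.exp (-((r+x)^2)/(4*τ))) (Real.exp (-((r-x)^2)/(4*τ)))
      have h4 : |τ*Real.sqrt τ| = τ*Real.sqrt τ := abs_of_nonneg (by positivity)
      rw [h4]
      have h5 : |Real.exp (-((r+x)^2)/(4*τ)) - Real.exp (-((r-x)^2)/(4*τ))| ≤ 2 := by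
        calc _ ≤ |Real.exp (-((r+x)^2)/(4*τ))| + |Real.exp (-((r-x)^2)/(4*τ))| := abs_sub _ _
          _ ≤ 2 := by linarith
      have : (0:ℝ) ≤ |2/(3*x*Real.sqrt π)| * (τ*Real.sqrt τ) := by positivity
      nlinarith
    · have := (hid.mul hsq).const_mul (|2/(3*x*Real.sqrt π)|)
      simpa using (this.mul_const 2)
  -- t3/t4
  have t34 : ∀ (q a : ℝ), Tendsto (fun τ : ℝ => q * (Real.sqrt τ * Real.exp (-(a^2)/(4*τ))))
      (𝓝[>] (0:ℝ)) (𝓝 0) := by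
    intro q a
    apply squeeze_zero_norm' (a := fun τ : ℝ => |q| * Real.sqrt τ)
    · filter_upwards [hmem] with τ hτ
      rw [Real.norm_eq_abs, abs_mul, abs_mul]
      have h1 := hexp_le a τ hτ
      have hs : |Real.sqrt τ| = Real.sqrt τ := abs_of_nonneg (Real.sqrt_nonneg τ)
      rw [hs]
      have : (0:ℝ) ≤ |q| * Real.sqrt τ := by positivity
      nlinarith [abs_nonneg q, Real.sqrt_nonneg τ, abs_nonneg (Real.exp (-(a^2)/(4*τ)))]
    · simpa using hsq.const_mul (|q|)
  have t5 : Tendsto (fun τ : ℝ => ((r+x)^2/4 - (r+x)^3/(6*x)) * erf ((r+x)/(2*Real.sqrt τ)))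
      (𝓝[>] (0:ℝ)) (𝓝 (((r+x)^2/4 - (r+x)^3/(6*x)) * 1)) := by
    have := erf_comp_tendsto_sign (r+x)
    rw [Real.sign_of_pos (by linarith : (0:ℝ) < r+x)] at this
    exact this.const_mul _
  have t6 : Tendsto (fun τ : ℝ => ((r-x)^2/4 + (r-x)^3/(6*x)) * erf ((r-x)/(2*Real.sqrt τ)))
      (𝓝[>] (0:ℝ)) (𝓝 (((r-x)^2/4 + (r-x)^3/(6*x)) * Real.sign (r-x))) :=
    (erf_comp_tendsto_sign (r-x)).const_mul _
  have htot := ((((t1.add t2).add (t34 ((r+x)/(2*Real.sqrt π) - (r+x)^2/(3*x*Real.sqrt π)) (r+x))).add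
      (t34 ((r-x)/(2*Real.sqrt π) + (r-x)^2/(3*x*Real.sqrt π)) (r-x))).add t5).add t6
  have := htot.congr (fun τ => by simp only [Fa] :
    ∀ τ : ℝ, (fun τ : ℝ => τ/2 * (erf ((r-x)/(2*Real.sqrt τ)) + erf ((r+x)/(2*Real.sqrt τ)))
      + 2/(3*x*Real.sqrt π) * (τ*Real.sqrt τ) *
          (Real.exp (-((r+x)^2)/(4*τ)) - Real.exp (-((r-x)^2)/(4*τ)))
      + ((r+x)/(2*Real.sqrt π) - (r+x)^2/(3*x*Real.sqrt π)) *
          (Real.sqrt τ * Real.exp (-((r+x)^2)/(4*τ)))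
      + ((r-x)/(2*Real.sqrt π) + (r-x)^2/(3*x*Real.sqrt π)) *
          (Real.sqrt τ * Real.exp (-((r-x)^2)/(4*τ)))
      + ((r+x)^2/4 - (r+x)^3/(6*x)) * erf ((r+x)/(2*Real.sqrt τ))
      + ((r-x)^2/4 + (r-x)^3/(6*x)) * erf ((r-x)/(2*Real.sqrt τ))) τ = Fa x r τ)
  simpa using this



section pos
variable (x τ : ℝ)

noncomputable def Phi (ρ : ℝ) : ℝ :=
  (1/2) * (erf ((ρ - x) / (2 * Real.sqrt τ)) + erf ((ρ + x) / (2 * Real.sqrt τ)))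
  + (1/x) * Real.sqrt (τ/π)
      * (Real.exp (-((ρ+x)^2) / (4*τ)) - Real.exp (-((ρ-x)^2) / (4*τ)))

lemma erf_shift_hasDerivAt (c ρ : ℝ) (hτ : 0 < τ) :
    HasDerivAt (fun ρ : ℝ => erf ((ρ + c) / (2 * Real.sqrt τ)))
      (1/(2*Real.sqrt τ) * (2 / Real.sqrt π * Real.exp (-((ρ+c)^2) / (4*τ)))) ρ := by
  have hinner : HasDerivAt (fun ρ : ℝ => (ρ + c) / (2 * Real.sqrt τ)) (1/(2*Real.sqrt τ)) ρ := by
    simpa using ((hasDerivAt_id ρ).add_const c).div_const (2 * Real.sqrt τ)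
  have h := (erf_hasDerivAt ((ρ + c) / (2 * Real.sqrt τ))).comp ρ hinner
  have h2 : Real.sqrt τ ^ 2 = τ := Real.sq_sqrt hτ.le
  have hexp : -(((ρ+c)) / (2 * Real.sqrt τ))^2 = -((ρ+c)^2) / (4*τ) := by
    rw [div_pow, mul_pow, h2]; ring
  rw [hexp] at h
  convert (config := {postTransparency := .default}) h using 1
  ring

lemma exp_shift_hasDerivAt (c ρ : ℝ) (hτ : 0 < τ) :
    HasDerivAt (fun ρ : ℝ => Real.exp (-((ρ+c)^2) / (4*τ)))
      (-((ρ+c)/(2*τ)) * Real.exp (-((ρ+c)^2) / (4*τ))) ρ := by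
  have hinner : HasDerivAt (fun ρ : ℝ => -((ρ+c)^2) / (4*τ)) (-((ρ+c)/(2*τ))) ρ := by
    have h := (((hasDerivAt_id ρ).add_const c).pow 2).neg.div_const (4*τ)
    convert (config := {postTransparency := .default}) h using 1
    simp only [id_eq]; field_simp; ring
  have h := (Real.hasDerivAt_exp (-((ρ+c)^2) / (4*τ))).comp ρ hinner
  convert (config := {postTransparency := .default}) h using 1
  ring

lemma Phi_hasDerivAt (ρ : ℝ) (hx : x ≠ 0) (hτ : 0 < τ) :
    HasDerivAt (Phi x τ)
      (ρ/(2*x*Real.sqrt π*Real.sqrt τ) *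
        (Real.exp (-((ρ-x)^2) / (4*τ)) - Real.exp (-((ρ+x)^2) / (4*τ)))) ρ := by
  have h2 : Real.sqrt τ ^ 2 = τ := Real.sq_sqrt hτ.le
  have hsτ : Real.sqrt τ ≠ 0 := (Real.sqrt_pos.2 hτ).ne'
  have hsπ : Real.sqrt π ≠ 0 := sqrt_pi_pos.ne'
  have e1 := erf_shift_hasDerivAt τ (-x) ρ hτ
  have e2 := erf_shift_hasDerivAt τ x ρ hτ
  have e3 := exp_shift_hasDerivAt τ x ρ hτ
  have e4 := exp_shift_hasDerivAt τ (-x) ρ hτ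
  have htot := ((e1.add e2).const_mul (1/2:ℝ)).add
    ((e3.sub e4).const_mul ((1/x) * Real.sqrt (τ/π)))
  have hfun : (fun ρ => (1/2:ℝ) * (erf ((ρ + -x) / (2 * Real.sqrt τ)) + erf ((ρ + x) / (2 * Real.sqrt τ)))
      + (1/x) * Real.sqrt (τ/π) *
        (Real.exp (-((ρ+x)^2) / (4*τ)) - Real.exp (-((ρ + -x)^2) / (4*τ)))) = Phi x τ := by
    funext ρ; simp only [Phi]; ring_nf
  rw [← hfun]
  convert (config := {postTransparency := .default}) htot using 1
  rw [Real.sqrt_div hτ.le]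
  set u := Real.sqrt τ with hu
  rw [← h2]
  field_simp
  ring
end pos

lemma integrand_nonneg (x r τ : ℝ) (hx : 0 < x) (hr : 0 < r) (hτ : 0 < τ) :
    0 ≤ (1/2) * (erf ((r - x) / (2 * Real.sqrt τ)) + erf ((r + x) / (2 * Real.sqrt τ)))
        + (1/x) * Real.sqrt (τ/π)
            * (Real.exp (-((r+x)^2) / (4*τ)) - Real.exp (-((r-x)^2) / (4*τ))) := by
  have hD : ∀ ρ ∈ Set.uIcc (0:ℝ) r, HasDerivAt (Phi x τ)
      (ρ/(2*x*Real.sqrt π*Real.sqrt τ) *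
        (Real.exp (-((ρ-x)^2) / (4*τ)) - Real.exp (-((ρ+x)^2) / (4*τ)))) ρ :=
    fun ρ _ => Phi_hasDerivAt x τ ρ hx.ne' hτ
  have hcont : Continuous (fun ρ : ℝ => ρ/(2*x*Real.sqrt π*Real.sqrt τ) *
      (Real.exp (-((ρ-x)^2) / (4*τ)) - Real.exp (-((ρ+x)^2) / (4*τ)))) := by
    continuity
  have key := intervalIntegral.integral_eq_sub_of_hasDerivAt hD
    (hcont.intervalIntegrable 0 r)
  have hPhi0 : Phi x τ 0 = 0 := by
    simp only [Phi]
    have h1 : ((0:ℝ) - x) / (2 * Real.sqrt τ) = -(((0:ℝ) + x) / (2 * Real.sqrt τ)) := by ring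
    have h2 : ((0:ℝ) - x)^2 = ((0:ℝ) + x)^2 := by ring
    rw [h1, h2, erf_neg]
    ring
  have hint_nonneg : 0 ≤ ∫ ρ in (0:ℝ)..r, ρ/(2*x*Real.sqrt π*Real.sqrt τ) *
      (Real.exp (-((ρ-x)^2) / (4*τ)) - Real.exp (-((ρ+x)^2) / (4*τ))) := by
    apply intervalIntegral.integral_nonneg hr.le
    intro ρ hρ
    apply mul_nonneg
    · have : 0 ≤ ρ := hρ.1
      positivity
    · rw [sub_nonneg]
      apply Real.exp_le_exp.2
      rw [div_le_div_iff_of_pos_right (by linarith : (0:ℝ) < 4*τ)]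
      have : 0 ≤ ρ := hρ.1
      nlinarith
  rw [key, hPhi0, sub_zero] at hint_nonneg
  simpa only [Phi] using hint_nonneg

lemma sign_mul_pow3 (y : ℝ) : Real.sign y * y^3 = |y|^3 := by
  rcases lt_trichotomy y 0 with h | h | h
  · rw [Real.sign_of_neg h, abs_of_neg h]; ring
  · subst h; simp
  · rw [Real.sign_of_pos h, abs_of_pos h]; ring

/-- The asymptotic impact of a continuously-emitting noise source in the absence of flow and
molecule degradation: the improper integral converges and equals
`r_sum³/(6 x_n) − |r_dif|³/(6 x_n) − r_sum²/4 − β r_dif²/4`. -/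
theorem asymptotic_impact_no_flow_no_degradation (x_n r_obs r_dif r_sum β : ℝ)
    (hx : 0 < x_n) (hr : 0 < r_obs)
    (hdif : r_dif = r_obs - x_n) (hsum : r_sum = r_obs + x_n)
    (hβ : β = Real.sign r_dif) :
    MeasureTheory.IntegrableOn
      (fun τ =>
        (1/2) * (erf ((r_obs - x_n) / (2 * Real.sqrt τ))
                  + erf ((r_obs + x_n) / (2 * Real.sqrt τ)))
        + (1/x_n) * Real.sqrt (τ/π)
            * (Real.exp (-(r_sum^2) / (4*τ)) - Real.exp (-(r_dif^2) / (4*τ))))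
      (Set.Ioi (0:ℝ)) ∧
    ∫ τ in Set.Ioi (0:ℝ),
      ((1/2) * (erf ((r_obs - x_n) / (2 * Real.sqrt τ))
                 + erf ((r_obs + x_n) / (2 * Real.sqrt τ)))
        + (1/x_n) * Real.sqrt (τ/π)
            * (Real.exp (-(r_sum^2) / (4*τ)) - Real.exp (-(r_dif^2) / (4*τ))))
    = r_sum^3/(6*x_n) - |r_dif|^3/(6*x_n) - r_sum^2/4 - β * r_dif^2/4 := by
  subst hdif hsum hβ
  set L0 : ℝ := ((r_obs+x_n)^2/4 - (r_obs+x_n)^3/(6*x_n)) * 1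
    + ((r_obs-x_n)^2/4 + (r_obs-x_n)^3/(6*x_n)) * Real.sign (r_obs-x_n) with hL0
  set F : ℝ → ℝ := fun τ => if τ ≤ 0 then L0 else Fa x_n r_obs τ with hF
  have hF0 : F 0 = L0 := if_pos le_rfl
  have hFeq : ∀ t : ℝ, 0 < t → F t = Fa x_n r_obs t := fun t ht => if_neg (not_le.2 ht)
  -- continuity at 0 within Ici 0
  have hcont : ContinuousWithinAt F (Set.Ici (0:ℝ)) 0 := by
    have hIci : Set.Ici (0:ℝ) = {0} ∪ Set.Ioi 0 := by
      ext t; simp [Set.mem_Ici, Set.mem_Ioi, le_iff_lt_or_eq, or_comm, eq_comm]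
    unfold ContinuousWithinAt
    rw [hF0, hIci, nhdsWithin_union, tendsto_sup]
    constructor
    · rw [nhdsWithin_singleton]
      have := tendsto_pure_nhds F 0
      rwa [hF0] at this
    · have h1 := Fa_tendsto_zero x_n r_obs hx hr
      refine Filter.Tendsto.congr' ?_ h1
      filter_upwards [self_mem_nhdsWithin] with t (ht : (0:ℝ) < t)
      exact (hFeq t ht).symm
  -- derivative
  have hderiv : ∀ τ ∈ Set.Ioi (0:ℝ), HasDerivAt F
      ((1/2) * (erf ((r_obs - x_n) / (2 * Real.sqrt τ))
                 + erf ((r_obs + x_n) / (2 * Real.sqrt τ)))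
        + (1/x_n) * Real.sqrt (τ/π)
            * (Real.exp (-((r_obs + x_n)^2) / (4*τ))
               - Real.exp (-((r_obs - x_n)^2) / (4*τ)))) τ := by
    intro τ hτ
    have h := Fa_hasDerivAt x_n r_obs τ hx hτ
    apply h.congr_of_eventuallyEq
    filter_upwards [isOpen_Ioi.mem_nhds hτ] with t (ht : (0:ℝ) < t)
    exact hFeq t ht
  -- nonnegativity
  have hpos : ∀ τ ∈ Set.Ioi (0:ℝ),
      0 ≤ (1/2) * (erf ((r_obs - x_n) / (2 * Real.sqrt τ))
                 + erf ((r_obs + x_n) / (2 * Real.sqrt τ)))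
        + (1/x_n) * Real.sqrt (τ/π)
            * (Real.exp (-((r_obs + x_n)^2) / (4*τ))
               - Real.exp (-((r_obs - x_n)^2) / (4*τ))) :=
    fun τ hτ => integrand_nonneg x_n r_obs τ hx hr hτ
  -- limit at infinity
  have hlim : Tendsto F atTop (𝓝 0) := by
    refine Filter.Tendsto.congr' ?_ (Fa_tendsto_atTop x_n r_obs hx)
    filter_upwards [eventually_gt_atTop (0:ℝ)] with t ht
    exact (hFeq t ht).symm
  have hInt := integrableOn_Ioi_deriv_of_nonneg hcont hderiv hpos hlim
  have hval := integral_Ioi_of_hasDerivAt_of_nonneg hcont hderiv hpos hlim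
  rw [hF0] at hval
  constructor
  · exact hInt
  · rw [hval, hL0]
    have hsgn := sign_mul_pow3 (r_obs - x_n)
    rw [← hsgn]
    field_simp
    ring
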